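/- Let R be a commutative ring, M an R-module, n a natural number, and v₁, …, v₂ₙ elements of M. In the exterior algebra ⋀(M) over R, the element ω = Σ_{i=1}^{n} ι(vᵢ)·ι(v_{n+i}) (where ι : M → ⋀(M) is the canonical inclusion and · is the algebra product) satisfies ω^{n+1} = 0. -/
import Mathlib

open ExteriorAlgebra

private lemma ia_swap {R : Type*} [CommRing R] {M : Type*} [AddCommGroup M] [Module R M]
    (x y : M) : ι R x * ι R y = -(ι R y * ι R x) :=
  eq_neg_of_add_eq_zero_left (ι_add_mul_swap x y)

private lemma ia_comm1 {R : Type*} [CommRing R] {M : Type*} [AddCommGroup M] [Module R M]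
    (x y z : M) : Commute (ι R x * ι R y) (ι R z) := by
  show _ = _
  calc ι R x * ι R y * ι R z = ι R x * (ι R y * ι R z) := by noncomm_ring
    _ = ι R x * (-(ι R z * ι R y)) := by rw [ia_swap y z]
    _ = -(ι R x * ι R z) * ι R y := by noncomm_ring
    _ = -(-(ι R z * ι R x)) * ι R y := by rw [ia_swap x z]
    _ = ι R z * (ι R x * ι R y) := by noncomm_ring

private lemma ia_sq {R : Type*} [CommRing R] {M : Type*} [AddCommGroup M] [Module R M]
    (x y : M) : (ι R x * ι R y) * (ι R x * ι R y) = 0 := by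
  calc ι R x * ι R y * (ι R x * ι R y) = ι R x * (ι R y * ι R x) * ι R y := by noncomm_ring
    _ = ι R x * (-(ι R x * ι R y)) * ι R y := by rw [ia_swap y x]
    _ = -((ι R x * ι R x) * (ι R y * ι R y)) := by noncomm_ring
    _ = 0 := by rw [ι_sq_zero]; simp

private lemma sum_sq_zero_pow {A : Type*} [Ring A] {κ : Type*} [DecidableEq κ] (s : Finset κ)
    (a : κ → A) (hc : ∀ i ∈ s, ∀ j ∈ s, Commute (a i) (a j))
    (hsq : ∀ i ∈ s, a i * a i = 0) :
    (∑ i ∈ s, a i) ^ (s.card + 1) = 0 := by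
  induction s using Finset.induction_on with
  | empty => simp
  | @insert x t hx ih =>
    rw [Finset.sum_insert hx, Finset.card_insert_of_notMem hx]
    have hC : Commute (a x) (∑ i ∈ t, a i) :=
      Commute.sum_right _ _ _ fun j hj =>
        hc x (Finset.mem_insert_self x t) j (Finset.mem_insert_of_mem hj)
    have hS : (∑ i ∈ t, a i) ^ (t.card + 1) = 0 :=
      ih (fun i hi j hj => hc i (Finset.mem_insert_of_mem hi) j (Finset.mem_insert_of_mem hj))
        (fun i hi => hsq i (Finset.mem_insert_of_mem hi))
    rw [hC.add_pow]
    apply Finset.sum_eq_zero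
    intro m hm
    match m with
    | 0 =>
      have h2 : (∑ i ∈ t, a i) ^ (t.card + 1 + 1) = 0 := by
        rw [pow_succ, hS, zero_mul]
      simp [h2]
    | 1 =>
      simp [hS]
    | (m + 2) =>
      have h2 : a x ^ (m + 2) = 0 := by
        rw [pow_add, pow_two, hsq x (Finset.mem_insert_self x t), mul_zero]
      simp [h2]

/-- In the exterior algebra of a module `M` over a commutative ring `R`, for elements
`v₁, …, v₂ₙ ∈ M`, the element `ω = Σ_{i=1}^{n} ι(vᵢ)·ι(v_{n+i})` satisfies `ω^(n+1) = 0`. -/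
theorem exteriorAlgebra_sum_pairs_pow_succ_eq_zero
    {R : Type*} [CommRing R] {M : Type*} [AddCommGroup M] [Module R M]
    (n : ℕ) (v : Fin (2 * n) → M) :
    (∑ i : Fin n,
        ExteriorAlgebra.ι R (v ⟨i.val, by have := i.isLt; omega⟩) *
          ExteriorAlgebra.ι R (v ⟨n + i.val, by have := i.isLt; omega⟩)) ^ (n + 1)
      = 0 := by
  have := sum_sq_zero_pow (A := ExteriorAlgebra R M) (Finset.univ : Finset (Fin n))
    (fun i => ι R (v ⟨i.val, by have := i.isLt; omega⟩) *
      ι R (v ⟨n + i.val, by have := i.isLt; omega⟩))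
    (fun i _ j _ => ((ia_comm1 _ _ _).mul_right (ia_comm1 _ _ _)).symm)
    (fun i _ => ia_sq _ _)
  simpa using this
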